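/- For every a ∈ [0,1), every x in the open unit ball B ⊂ ℝ^n (n ≥ 2) and every y ∈ ℝ^n, one has F_a^*(x, −y) ≤ ((1+a)/(1−a)) F_a^*(x, y). -/

import Mathlib

open Metric

/-- The polar transform (co-metric) of the Funk-type metric `F_a`. -/
noncomputable def FaStar (n : ℕ) (a : ℝ) (x y : EuclideanSpace ℝ (Fin n)) : ℝ :=
  (Real.sqrt ((1 - ‖x‖ ^ 2) * (1 - a ^ 2 * ‖x‖ ^ 2) * ‖y‖ ^ 2 -
      (1 - a ^ 2) * (1 - ‖x‖ ^ 2) * (inner ℝ x y : ℝ) ^ 2) -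
    a * (1 - ‖x‖ ^ 2) * (inner ℝ x y : ℝ)) / (1 - a ^ 2 * ‖x‖ ^ 2)

set_option maxHeartbeats 1000000 in
theorem stmt_12 (n : ℕ) (hn : 2 ≤ n) (a : ℝ) (ha : a ∈ Set.Ico (0 : ℝ) 1)
    (x : EuclideanSpace ℝ (Fin n)) (hx : x ∈ ball (0 : EuclideanSpace ℝ (Fin n)) 1)
    (y : EuclideanSpace ℝ (Fin n)) :
    FaStar n a x (-y) ≤ ((1 + a) / (1 - a)) * FaStar n a x y := by
  obtain ⟨ha0, ha1⟩ := ha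
  have hx1 : ‖x‖ < 1 := by simpa using hx
  have hx0 : 0 ≤ ‖x‖ := norm_nonneg x
  have hr2 : ‖x‖ ^ 2 < 1 := by nlinarith
  set p : ℝ := inner ℝ x y with hp
  have hCS : p ^ 2 ≤ ‖x‖ ^ 2 * ‖y‖ ^ 2 := by
    have h := abs_real_inner_le_norm x y
    have h2 : |p| ^ 2 ≤ (‖x‖ * ‖y‖) ^ 2 := by
      have := abs_nonneg p
      nlinarith
    calc p ^ 2 = |p| ^ 2 := (sq_abs p).symm
      _ ≤ (‖x‖ * ‖y‖) ^ 2 := h2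
      _ = ‖x‖ ^ 2 * ‖y‖ ^ 2 := by ring
  set Q : ℝ := (1 - ‖x‖ ^ 2) * (1 - a ^ 2 * ‖x‖ ^ 2) * ‖y‖ ^ 2 -
      (1 - a ^ 2) * (1 - ‖x‖ ^ 2) * p ^ 2 with hQ
  have ha2 : a ^ 2 < 1 := by nlinarith
  have h1 : (1 - a ^ 2) * p ^ 2 ≤ (1 - a ^ 2) * (‖x‖ ^ 2 * ‖y‖ ^ 2) :=
    mul_le_mul_of_nonneg_left hCS (by nlinarith)
  have h2 : (1 - a ^ 2) * p ^ 2 ≤ (1 - a ^ 2 * ‖x‖ ^ 2) * ‖y‖ ^ 2 := by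
    nlinarith [mul_nonneg (by nlinarith : (0:ℝ) ≤ 1 - ‖x‖ ^ 2) (sq_nonneg ‖y‖)]
  have hQ0 : 0 ≤ Q := by
    have := mul_le_mul_of_nonneg_left h2 (by nlinarith : (0:ℝ) ≤ 1 - ‖x‖ ^ 2)
    rw [hQ]; nlinarith
  set s : ℝ := Real.sqrt Q with hs
  have hs0 : 0 ≤ s := Real.sqrt_nonneg Q
  have hs2 : s ^ 2 = Q := Real.sq_sqrt hQ0
  have hD : 0 < 1 - a ^ 2 * ‖x‖ ^ 2 := by nlinarith
  have key : a * (1 - ‖x‖ ^ 2) * p ≤ a * s := by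
    rcases le_or_gt p 0 with hple | hpgt
    · have hle : a * (1 - ‖x‖ ^ 2) * p ≤ 0 :=
        mul_nonpos_of_nonneg_of_nonpos (by nlinarith) hple
      have hge : 0 ≤ a * s := mul_nonneg ha0 hs0
      linarith
    · have hsq : ((1 - ‖x‖ ^ 2) * p) ^ 2 ≤ Q := by
        rw [hQ]
        nlinarith [sq_nonneg (1 - ‖x‖ ^ 2), sq_nonneg ‖y‖,
          mul_le_mul_of_nonneg_left hCS (by nlinarith : (0:ℝ) ≤ 2 - ‖x‖ ^ 2 - a ^ 2),
          mul_le_mul_of_nonneg_left hCS (by nlinarith : (0:ℝ) ≤ 1 - ‖x‖ ^ 2)]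
      have hstep : (1 - ‖x‖ ^ 2) * p ≤ s := Real.le_sqrt_of_sq_le hsq
      calc a * (1 - ‖x‖ ^ 2) * p = a * ((1 - ‖x‖ ^ 2) * p) := by ring
        _ ≤ a * s := mul_le_mul_of_nonneg_left hstep ha0
  have hinner : (inner ℝ x (-y) : ℝ) = -p := by
    rw [hp]; exact inner_neg_right x y
  have hnorm : ‖(-y : EuclideanSpace ℝ (Fin n))‖ = ‖y‖ := norm_neg y
  have hFy : FaStar n a x y = (s - a * (1 - ‖x‖ ^ 2) * p) / (1 - a ^ 2 * ‖x‖ ^ 2) := by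
    rw [FaStar, hs, hQ, hp]
  have hFny : FaStar n a x (-y) =
      (s + a * (1 - ‖x‖ ^ 2) * p) / (1 - a ^ 2 * ‖x‖ ^ 2) := by
    rw [FaStar, hinner, hnorm, hs, hQ]
    ring_nf
  rw [hFy, hFny]
  rw [div_mul_div_comm, div_le_div_iff₀ hD (by nlinarith : (0:ℝ) < (1 - a) * (1 - a ^ 2 * ‖x‖ ^ 2))]
  nlinarith [mul_le_mul_of_nonneg_right key hD.le]
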